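/- Let h : ℝ^n → ℝ be continuously differentiable, α : ℝ → ℝ locally Lipschitz with α(0) = 0 and α nondecreasing, and let x : [0, T] → ℝ^n be a C¹ trajectory satisfying d/dt h(x(t)) ≥ -α(h(x(t))) for all t ∈ [0, T]. If h(x(0)) ≥ 0, then h(x(t)) ≥ 0 for all t ∈ [0, T]. -/

import Mathlib

theorem cbf_forward_invariance (n : ℕ) (h : EuclideanSpace ℝ (Fin n) → ℝ)
    (hh : ContDiff ℝ 1 h) (α : ℝ → ℝ) (hα : LocallyLipschitz α)
    (hα0 : α 0 = 0) (hmono : Monotone α)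
    (T : ℝ) (hT : T ≥ 0) (x : ℝ → EuclideanSpace ℝ (Fin n)) (hx : ContDiff ℝ 1 x)
    (hineq : ∀ t ∈ Set.Icc 0 T, deriv (fun s => h (x s)) t ≥ -α (h (x t)))
    (h0 : h (x 0) ≥ 0) :
    ∀ t ∈ Set.Icc 0 T, h (x t) ≥ 0 := by
  set g : ℝ → ℝ := fun s => h (x s) with hg
  have hgd : Differentiable ℝ g :=
    (hh.differentiable one_ne_zero).comp (hx.differentiable one_ne_zero)
  have hgc : Continuous g := hgd.continuous
  intro t ht
  by_contra hneg
  push_neg at hneg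
  obtain ⟨ht0, htT⟩ := ht
  set S : Set ℝ := Set.Icc 0 t ∩ g ⁻¹' Set.Ici 0 with hS
  have hSne : S.Nonempty := ⟨0, ⟨le_refl 0, ht0⟩, h0⟩
  have hSbdd : BddAbove S := BddAbove.mono Set.inter_subset_left (bddAbove_Icc)
  have hSclosed : IsClosed S := isClosed_Icc.inter (isClosed_Ici.preimage hgc)
  set s₀ := sSup S with hs₀
  have hs₀mem : s₀ ∈ S := hSclosed.csSup_mem hSne hSbdd
  obtain ⟨⟨hs₀0, hs₀t⟩, hs₀g⟩ := hs₀mem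
  have hs₀g : g s₀ ≥ 0 := hs₀g
  have hs₀lt : s₀ < t := lt_of_le_of_ne hs₀t
    (fun heq => absurd hs₀g (not_le.mpr (heq ▸ hneg)))
  -- on (s₀, t], g < 0
  have hgu : ∀ u ∈ Set.Ioc s₀ t, g u < 0 := by
    intro u ⟨hu1, hu2⟩
    by_contra hc
    push_neg at hc
    have : u ∈ S := ⟨⟨le_trans hs₀0 hu1.le, hu2⟩, hc⟩
    exact absurd (le_csSup hSbdd this) (not_le.mpr hu1)
  -- deriv g ≥ 0 on interior (s₀, t)
  have hmonoOn : MonotoneOn g (Set.Icc s₀ t) := by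
    apply monotoneOn_of_deriv_nonneg (convex_Icc _ _) hgc.continuousOn
      (fun u _ => (hgd u).differentiableWithinAt)
    intro u hu
    rw [interior_Icc] at hu
    have hglt : g u < 0 := hgu u ⟨hu.1, hu.2.le⟩
    have huT : u ∈ Set.Icc 0 T :=
      ⟨le_trans hs₀0 hu.1.le, le_trans hu.2.le htT⟩
    have := hineq u huT
    have hα_le : α (g u) ≤ 0 := hα0 ▸ hmono hglt.le
    linarith
  have := hmonoOn ⟨le_refl s₀, hs₀lt.le⟩ ⟨hs₀lt.le, le_refl t⟩ hs₀lt.le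
  linarith
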